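/- Let u be a positive continuous function on [0,∞) with lim_{r→∞} log u(r)/√r = ∞, and suppose u is (log, x²)-convex (x ↦ log u(x²) is convex on [0,∞)). Then the Legendre transform of the dual Legendre transform u*(r) = sup_{s≥0} e^{2√(rs)}/u(s) is given by ℓ_{u*}(t) = e^{2t}/(ℓ_u(t) t^{2t}) for all t ≥ 0 (with the convention t^{2t} = 1 at t = 0). -/

import Mathlib

noncomputable def ell (u : ℝ → ℝ) (t : ℝ) : ℝ :=
  ⨅ r : {r : ℝ // 0 < r}, u r / (r : ℝ) ^ t

noncomputable def dualL (u : ℝ → ℝ) (r : ℝ) : ℝ :=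
  ⨆ s : {s : ℝ // 0 ≤ s}, Real.exp (2 * Real.sqrt (r * s)) / u s

open Real Filter Set Topology

namespace LegendreAux

instance : Nonempty {s : ℝ // (0:ℝ) ≤ s} := ⟨⟨0, le_refl 0⟩⟩
instance : Nonempty {r : ℝ // (0:ℝ) < r} := ⟨⟨1, one_pos⟩⟩

lemma ell_lb {u : ℝ → ℝ} {t b : ℝ} (h : ∀ r > (0:ℝ), b ≤ u r / r ^ t) : b ≤ ell u t :=
  le_ciInf (fun r => h r r.2)

lemma ell_le {u : ℝ → ℝ} {t c : ℝ} (hc : ∀ r > (0:ℝ), c ≤ u r / r ^ t) {r : ℝ} (hr : 0 < r) :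
    ell u t ≤ u r / r ^ t :=
  ciInf_le ⟨c, by rintro x ⟨i, rfl⟩; exact hc i i.2⟩ (⟨r, hr⟩ : {r : ℝ // (0:ℝ) < r})

lemma dual_le {u : ℝ → ℝ} {r B : ℝ}
    (h : ∀ s ≥ (0:ℝ), Real.exp (2 * Real.sqrt (r * s)) / u s ≤ B) : dualL u r ≤ B :=
  ciSup_le (fun s => h s s.2)

lemma log_le_two_sqrt {r : ℝ} (hr : 0 < r) : Real.log r ≤ 2 * Real.sqrt r := by
  have h1 : Real.log (Real.sqrt r) = Real.log r / 2 := Real.log_sqrt hr.le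
  have h2 : Real.log (Real.sqrt r) ≤ Real.sqrt r - 1 :=
    Real.log_le_sub_one_of_pos (Real.sqrt_pos.2 hr)
  nlinarith [Real.sqrt_nonneg r]

lemma tpow_pos {t : ℝ} (ht : 0 ≤ t) : 0 < t ^ (2*t) := by
  rcases eq_or_lt_of_le ht with h | h
  · simp [← h]
  · exact Real.rpow_pos_of_pos h _

lemma elem_ineq {t q : ℝ} (ht : 0 ≤ t) (hq : 0 ≤ q) :
    Real.exp (2*t) * q ^ (2*t) ≤ Real.exp (2*q) * t ^ (2*t) := by
  rcases eq_or_lt_of_le ht with h | ht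
  · subst h
    simp only [mul_zero, Real.rpow_zero, mul_one, Real.exp_zero]
    exact Real.one_le_exp (by positivity)
  rcases eq_or_lt_of_le hq with h | hq
  · rw [← h, Real.zero_rpow (by positivity)]
    have := Real.rpow_pos_of_pos ht (2*t)
    nlinarith [Real.exp_pos (2*(0:ℝ))]
  have key : 2*t + Real.log q * (2*t) ≤ 2*q + Real.log t * (2*t) := by
    have hlog : Real.log (q/t) ≤ q/t - 1 := Real.log_le_sub_one_of_pos (by positivity)
    rw [Real.log_div hq.ne' ht.ne'] at hlog
    have : t * (Real.log q - Real.log t) ≤ t * (q/t - 1) :=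
      mul_le_mul_of_nonneg_left hlog ht.le
    have ht' : t * (q/t) = q := by field_simp
    nlinarith
  calc Real.exp (2*t) * q ^ (2*t) = Real.exp (2*t + Real.log q * (2*t)) := by
        rw [Real.rpow_def_of_pos hq, Real.exp_add]
    _ ≤ Real.exp (2*q + Real.log t * (2*t)) := Real.exp_le_exp.2 key
    _ = Real.exp (2*q) * t ^ (2*t) := by rw [Real.rpow_def_of_pos ht, Real.exp_add]

section
variable {u : ℝ → ℝ} (hpos : ∀ r ≥ (0:ℝ), 0 < u r) (hcont : ContinuousOn u (Set.Ici 0))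
  (hlim : Tendsto (fun r => Real.log (u r) / Real.sqrt r) atTop atTop)
include hpos hcont hlim

omit hpos hcont in
lemma thr (K : ℝ) : ∃ S : ℝ, 1 ≤ S ∧ ∀ s, S ≤ s → K * Real.sqrt s ≤ Real.log (u s) := by
  obtain ⟨S0, hS0⟩ := (hlim.eventually_ge_atTop K).exists_forall_of_atTop
  refine ⟨max S0 1, le_max_right _ _, fun s hs => ?_⟩
  have h1 : (1:ℝ) ≤ s := le_trans (le_max_right _ _) hs
  have hsq : 0 < Real.sqrt s := Real.sqrt_pos.2 (by linarith)
  have h2 := hS0 s (le_trans (le_max_left _ _) hs)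
  calc K * Real.sqrt s ≤ (Real.log (u s) / Real.sqrt s) * Real.sqrt s := by
        exact mul_le_mul_of_nonneg_right h2 hsq.le
    _ = Real.log (u s) := div_mul_cancel₀ _ hsq.ne'

omit hlim in
lemma cmin {R : ℝ} (hR : 0 ≤ R) : ∃ m > (0:ℝ), ∀ s ∈ Set.Icc (0:ℝ) R, m ≤ u s := by
  obtain ⟨z, hz, hzmin⟩ := isCompact_Icc.exists_isMinOn (Set.nonempty_Icc.2 hR)
    (hcont.mono (fun x hx => hx.1))
  exact ⟨u z, hpos z hz.1, fun s hs => isMinOn_iff.1 hzmin s hs⟩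

lemma ell_pos_bound {t : ℝ} (ht : 0 ≤ t) :
    ∃ c > (0:ℝ), ∀ r > (0:ℝ), c ≤ u r / r ^ t := by
  obtain ⟨S, hS1, hS⟩ := thr hlim (2*t)
  obtain ⟨m, hm, hmle⟩ := cmin hpos hcont (le_trans zero_le_one hS1)
  have hSt : (0:ℝ) < S ^ t := Real.rpow_pos_of_pos (by linarith) t
  refine ⟨min 1 (m / S ^ t), lt_min one_pos (by positivity), fun r hr => ?_⟩
  rcases le_or_gt r S with hrS | hrS
  · refine le_trans (min_le_right _ _) ?_
    exact div_le_div₀ (hpos r hr.le).le (hmle r ⟨hr.le, hrS⟩)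
      (Real.rpow_pos_of_pos hr t) (Real.rpow_le_rpow hr.le hrS ht)
  · refine le_trans (min_le_left _ _) ?_
    have hur : Real.exp (2*t*Real.sqrt r) ≤ u r := by
      rw [← Real.exp_log (hpos r hr.le)]
      exact Real.exp_le_exp.2 (by have := hS r hrS.le; linarith)
    have hrt : r ^ t ≤ Real.exp (2*t*Real.sqrt r) := by
      rw [Real.rpow_def_of_pos hr]
      exact Real.exp_le_exp.2 (by nlinarith [log_le_two_sqrt hr])
    rw [le_div_iff₀ (Real.rpow_pos_of_pos hr t)]
    nlinarith [Real.exp_pos (2*t*Real.sqrt r)]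

lemma dual_bddAbove {r : ℝ} (hr : 0 ≤ r) :
    BddAbove (Set.range fun s : {s : ℝ // 0 ≤ s} => Real.exp (2 * Real.sqrt (r * s)) / u s) := by
  obtain ⟨S, hS1, hS⟩ := thr hlim (2*Real.sqrt r + 1)
  obtain ⟨m, hm, hmle⟩ := cmin hpos hcont (le_trans zero_le_one hS1)
  refine ⟨max (Real.exp (2*Real.sqrt (r*S)) / m) 1, ?_⟩
  rintro x ⟨⟨s, hs⟩, rfl⟩
  dsimp only
  rcases le_or_gt s S with hsS | hsS
  · refine le_trans ?_ (le_max_left _ _)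
    have h1 : Real.sqrt (r*s) ≤ Real.sqrt (r*S) :=
      Real.sqrt_le_sqrt (mul_le_mul_of_nonneg_left hsS hr)
    exact div_le_div₀ (by positivity) (Real.exp_le_exp.2 (by linarith)) hm (hmle s ⟨hs, hsS⟩)
  · refine le_trans ?_ (le_max_right _ _)
    rw [div_le_one (hpos s hs)]
    rw [← Real.exp_log (hpos s hs)]
    refine Real.exp_le_exp.2 (le_trans ?_ (hS s hsS.le))
    rw [Real.sqrt_mul hr s]
    nlinarith [Real.sqrt_nonneg s]

lemma le_dual {r s : ℝ} (hr : 0 ≤ r) (hs : 0 ≤ s) :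
    Real.exp (2 * Real.sqrt (r * s)) / u s ≤ dualL u r :=
  le_ciSup (dual_bddAbove hpos hcont hlim hr) (⟨s, hs⟩ : {s : ℝ // 0 ≤ s})

lemma dual_pos {r : ℝ} (hr : 0 ≤ r) : 0 < dualL u r := by
  have h := le_dual hpos hcont hlim hr (le_refl (0:ℝ))
  simp only [mul_zero, Real.sqrt_zero, Real.exp_zero] at h
  calc (0:ℝ) < 1 / u 0 := by have := hpos 0 (le_refl _); positivity
    _ ≤ dualL u r := by simpa using h

lemma lower_bound {t : ℝ} (ht : 0 ≤ t) :
    Real.exp (2*t) / (ell u t * t ^ (2*t)) ≤ ell (dualL u) t := by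
  obtain ⟨c, hc, hcb⟩ := ell_pos_bound hpos hcont hlim ht
  have hell : 0 < ell u t := lt_of_lt_of_le hc (ell_lb hcb)
  have htp := tpow_pos ht
  refine ell_lb (fun r hr => ?_)
  have hD : 0 < dualL u r := dual_pos hpos hcont hlim hr.le
  have hrt : 0 < r ^ t := Real.rpow_pos_of_pos hr t
  have key : Real.exp (2*t) * r ^ t ≤ ell u t * (t ^ (2*t) * dualL u r) := by
    have h2 : ∀ s > (0:ℝ), Real.exp (2*t) * r ^ t / (t ^ (2*t) * dualL u r) ≤ u s / s ^ t := by
      intro s hs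
      have hst : 0 < s ^ t := Real.rpow_pos_of_pos hs t
      have h3 : Real.exp (2 * Real.sqrt (r*s)) ≤ dualL u r * u s := by
        have h := le_dual hpos hcont hlim hr.le hs.le
        rw [div_le_iff₀ (hpos s hs.le)] at h
        linarith
      have h4 := elem_ineq ht (Real.sqrt_nonneg (r*s))
      have h5 : (Real.sqrt (r*s)) ^ (2*t) = r ^ t * s ^ t := by
        rw [Real.sqrt_eq_rpow, ← Real.rpow_mul (by positivity : (0:ℝ) ≤ r*s),
          show (1/2) * (2*t) = t by ring, Real.mul_rpow hr.le hs.le]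
      rw [h5] at h4
      rw [div_le_div_iff₀ (by positivity) hst]
      nlinarith [mul_le_mul_of_nonneg_right h3 htp.le, Real.exp_pos (2*Real.sqrt (r*s))]
    have h6 : Real.exp (2*t) * r ^ t / (t ^ (2*t) * dualL u r) ≤ ell u t := ell_lb h2
    rw [div_le_iff₀ (by positivity)] at h6
    linarith
  rw [div_le_div_iff₀ (by positivity) hrt]
  nlinarith

lemma exists_min {t : ℝ} (ht : 0 < t) :
    ∃ r₀ > (0:ℝ), ∀ r > (0:ℝ), u r₀ / r₀ ^ t ≤ u r / r ^ t := by
  have hV0 : 0 < u 1 := hpos 1 zero_le_one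
  set V : ℝ := u 1 with hVdef
  obtain ⟨S, hS1, hS⟩ := thr hlim (2*t + |Real.log V| + 1)
  obtain ⟨m, hm, hmle⟩ := cmin hpos hcont zero_le_one
  set δ : ℝ := min ((m/V) ^ (1/t : ℝ)) 1 with hδdef
  have hδ0 : 0 < δ := lt_min (Real.rpow_pos_of_pos (by positivity) _) one_pos
  have hδ1 : δ ≤ 1 := min_le_right _ _
  have hδS : δ ≤ S := le_trans hδ1 hS1
  have hcont2 : ContinuousOn (fun r => u r / r ^ t) (Set.Icc δ S) := by
    refine ContinuousOn.div (hcont.mono (fun x hx => le_trans hδ0.le hx.1)) ?_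
      (fun x hx => ne_of_gt (Real.rpow_pos_of_pos (lt_of_lt_of_le hδ0 hx.1) t))
    exact ContinuousOn.rpow_const continuousOn_id
      (fun x hx => Or.inl (ne_of_gt (lt_of_lt_of_le hδ0 hx.1)))
  obtain ⟨r₀, hr₀mem, hr₀min⟩ := isCompact_Icc.exists_isMinOn (Set.nonempty_Icc.2 hδS) hcont2
  have h1mem : (1:ℝ) ∈ Set.Icc δ S := ⟨hδ1, hS1⟩
  have hminV : u r₀ / r₀ ^ t ≤ V := by
    have := isMinOn_iff.1 hr₀min 1 h1mem
    simpa [Real.one_rpow] using this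
  refine ⟨r₀, lt_of_lt_of_le hδ0 hr₀mem.1, fun r hr => ?_⟩
  rcases le_or_gt r δ with hrδ | hrδ
  · -- small r
    have hδt : δ ^ t ≤ m / V := by
      calc δ ^ t ≤ ((m/V) ^ (1/t : ℝ)) ^ t :=
            Real.rpow_le_rpow hδ0.le (min_le_left _ _) ht.le
        _ = m / V := by
            rw [← Real.rpow_mul (by positivity), one_div,
              inv_mul_cancel₀ (ne_of_gt ht), Real.rpow_one]
    have hVle : V ≤ m / δ ^ t := by
      rw [le_div_iff₀ (Real.rpow_pos_of_pos hδ0 t)]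
      rw [le_div_iff₀ hV0] at hδt
      linarith
    have h2 : m / δ ^ t ≤ u r / r ^ t :=
      div_le_div₀ (hpos r hr.le).le (hmle r ⟨hr.le, le_trans hrδ hδ1⟩)
        (Real.rpow_pos_of_pos hr t) (Real.rpow_le_rpow hr.le hrδ ht.le)
    linarith
  rcases le_or_gt r S with hrS | hrS
  · exact isMinOn_iff.1 hr₀min r ⟨hrδ.le, hrS⟩
  · -- large r
    have hr1 : (1:ℝ) ≤ r := le_trans hS1 hrS.le
    have hsq1 : (1:ℝ) ≤ Real.sqrt r := by
      rw [show (1:ℝ) = Real.sqrt 1 by simp]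
      exact Real.sqrt_le_sqrt hr1
    have hur : Real.exp ((2*t + |Real.log V| + 1)*Real.sqrt r) ≤ u r := by
      rw [← Real.exp_log (hpos r hr.le)]
      exact Real.exp_le_exp.2 (hS r hrS.le)
    have hrt : r ^ t ≤ Real.exp (2*t*Real.sqrt r) := by
      rw [Real.rpow_def_of_pos hr]
      exact Real.exp_le_exp.2 (by nlinarith [log_le_two_sqrt hr])
    have hVr : V ≤ u r / r ^ t := by
      rw [le_div_iff₀ (Real.rpow_pos_of_pos hr t)]
      have hVexp : V ≤ Real.exp ((|Real.log V| + 1) * Real.sqrt r) := by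
        have h9 : Real.log V ≤ (|Real.log V| + 1) * Real.sqrt r := by
          nlinarith [le_abs_self (Real.log V), abs_nonneg (Real.log V)]
        calc V = Real.exp (Real.log V) := (Real.exp_log hV0).symm
          _ ≤ _ := Real.exp_le_exp.2 h9
      calc V * r ^ t ≤ Real.exp ((|Real.log V| + 1) * Real.sqrt r) * Real.exp (2*t*Real.sqrt r) := by
            have hV0' : (0:ℝ) ≤ V := hV0.le
            have := Real.rpow_pos_of_pos hr t
            nlinarith [Real.exp_pos ((|Real.log V| + 1) * Real.sqrt r)]
        _ = Real.exp ((2*t + |Real.log V| + 1)*Real.sqrt r) := by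
            rw [← Real.exp_add]; ring_nf
        _ ≤ u r := hur
    linarith

end

lemma subgrad {u : ℝ → ℝ} (hconv : ConvexOn ℝ (Set.Ici 0) (fun x : ℝ => Real.log (u (x ^ 2))))
    {t x₀ : ℝ} (ht : 0 < t) (hx₀ : 0 < x₀)
    (hmin : ∀ z > (0:ℝ), 2*t*Real.log z - 2*t*Real.log x₀ ≤
      Real.log (u (z^2)) - Real.log (u (x₀^2))) :
    ∀ x ≥ (0:ℝ), Real.log (u (x₀^2)) + (2*t/x₀) * (x - x₀) ≤ Real.log (u (x^2)) := by
  set g : ℝ → ℝ := fun x => Real.log (u (x ^ 2)) with hg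
  set y₀ : ℝ := 2*t/x₀ with hy₀
  set φ : ℝ → ℝ := fun z => 2*t*Real.log z with hφdef
  have hφ : HasDerivAt φ y₀ x₀ := by
    have h := (Real.hasDerivAt_log (ne_of_gt hx₀)).const_mul (2*t)
    have he : y₀ = 2*t * x₀⁻¹ := by rw [hy₀]; field_simp
    rw [he]; exact h
  have htends : Tendsto (slope φ x₀) (𝓝[≠] x₀) (𝓝 y₀) :=
    hasDerivAt_iff_tendsto_slope.1 hφ
  have hmono : MonotoneOn (slope g x₀) (Set.Ici 0 \ {x₀}) :=
    hconv.slope_mono (Set.mem_Ici.2 hx₀.le)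
  intro x hx
  rcases lt_trichotomy x x₀ with hlt | heq | hgt
  · have htends' : Tendsto (slope φ x₀) (𝓝[<] x₀) (𝓝 y₀) :=
      htends.mono_left (nhdsWithin_mono _ (fun z hz => ne_of_lt hz))
    have hev : ∀ᶠ z in 𝓝[<] x₀, slope g x₀ x ≤ slope φ x₀ z := by
      filter_upwards [Ioo_mem_nhdsLT_of_mem (⟨hlt, le_refl x₀⟩ : x₀ ∈ Set.Ioc x x₀)] with z hz
      have hz0 : 0 < z := lt_of_le_of_lt hx hz.1
      have hzx₀ : z < x₀ := hz.2
      have h1 : slope g x₀ x ≤ slope g x₀ z :=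
        hmono ⟨hx, ne_of_lt hlt⟩ ⟨hz0.le, ne_of_lt hzx₀⟩ hz.1.le
      refine le_trans h1 ?_
      have hnum : φ z - φ x₀ ≤ g z - g x₀ := by
        have := hmin z hz0
        simpa [hφdef, hg] using this
      rw [slope_def_field, slope_def_field, div_le_div_right_of_neg (sub_neg.2 hzx₀)]
      linarith
    have hle : slope g x₀ x ≤ y₀ := ge_of_tendsto htends' hev
    rw [slope_def_field, div_le_iff_of_neg (sub_neg.2 hlt)] at hle
    simp only [hg] at hle ⊢
    linarith
  · subst heq; simp
  · have htends' : Tendsto (slope φ x₀) (𝓝[>] x₀) (𝓝 y₀) :=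
      htends.mono_left (nhdsWithin_mono _ (fun z hz => ne_of_gt hz))
    have hev : ∀ᶠ z in 𝓝[>] x₀, slope φ x₀ z ≤ slope g x₀ x := by
      filter_upwards [Ioo_mem_nhdsGT_of_mem (⟨le_refl x₀, hgt⟩ : x₀ ∈ Set.Ico x₀ x)] with z hz
      have hz0 : 0 < z := lt_trans hx₀ hz.1
      have h1 : slope g x₀ z ≤ slope g x₀ x :=
        hmono ⟨hz0.le, ne_of_gt hz.1⟩ ⟨hx, ne_of_gt (lt_trans hz.1 hz.2)⟩ hz.2.le
      refine le_trans ?_ h1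
      have hnum : φ z - φ x₀ ≤ g z - g x₀ := by
        have := hmin z hz0
        simpa [hφdef, hg] using this
      rw [slope_def_field, slope_def_field]
      exact div_le_div_of_nonneg_right hnum (sub_pos.2 hz.1).le
    have hle : y₀ ≤ slope g x₀ x := le_of_tendsto htends' hev
    rw [slope_def_field, le_div_iff₀ (sub_pos.2 hgt)] at hle
    simp only [hg] at hle ⊢
    linarith

end LegendreAux

theorem legendre_of_dual_legendre (u : ℝ → ℝ)
    (hpos : ∀ r ≥ 0, 0 < u r)
    (hcont : ContinuousOn u (Set.Ici 0))
    (hlim : Filter.Tendsto (fun r => Real.log (u r) / Real.sqrt r)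
      Filter.atTop Filter.atTop)
    (hconv : ConvexOn ℝ (Set.Ici 0) (fun x : ℝ => Real.log (u (x ^ 2)))) :
    ∀ t ≥ (0 : ℝ),
      ell (dualL u) t = Real.exp (2 * t) / (ell u t * t ^ (2 * t)) := by
  intro t ht
  obtain ⟨c, hc, hcb⟩ := LegendreAux.ell_pos_bound hpos hcont hlim ht
  have hell : 0 < ell u t := lt_of_lt_of_le hc (LegendreAux.ell_lb hcb)
  have htp : 0 < t ^ (2*t) := LegendreAux.tpow_pos ht
  have hdq : ∀ r > (0:ℝ), (0:ℝ) ≤ dualL u r / r ^ t := fun r hr =>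
    (div_pos (LegendreAux.dual_pos hpos hcont hlim hr.le) (Real.rpow_pos_of_pos hr t)).le
  refine le_antisymm ?_ (LegendreAux.lower_bound hpos hcont hlim ht)
  rcases eq_or_lt_of_le ht with h0 | ht0
  · -- t = 0
    rw [← h0]
    norm_num
    set ℓ₀ : ℝ := ell u 0 with hℓ₀def
    have hℓ₀ : 0 < ℓ₀ := by rw [← h0] at hell; exact hell
    have hu_lb : ∀ s ≥ (0:ℝ), ℓ₀ ≤ u s := by
      intro s hs
      rcases eq_or_lt_of_le hs with h | h
      · have hev : ∀ᶠ z in 𝓝[>] (0:ℝ), ℓ₀ ≤ u z := by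
          filter_upwards [self_mem_nhdsWithin] with z hz
          have h5 := LegendreAux.ell_le (t := (0:ℝ)) (c := c)
            (by simpa [← h0] using hcb) hz
          simpa [Real.rpow_zero] using h5
        have htd : Tendsto u (𝓝[>] (0:ℝ)) (𝓝 (u 0)) :=
          ((hcont 0 (Set.mem_Ici.2 (le_refl 0))).tendsto).mono_left
            (nhdsWithin_mono _ (fun z hz => Set.mem_Ici.2 (le_of_lt hz)))
        rw [← h]
        exact ge_of_tendsto htd hev
      · simpa [Real.rpow_zero] using
          LegendreAux.ell_le (t := (0:ℝ)) (c := c) (by simpa [← h0] using hcb) h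
    refine le_of_forall_pos_le_add (fun ε hε => ?_)
    obtain ⟨S₁, hS₁1, hS₁⟩ := LegendreAux.thr hlim 2
    set S : ℝ := max S₁ ((max 0 (Real.log ℓ₀))^2) with hSdef
    have hS1 : (1:ℝ) ≤ S := le_trans hS₁1 (le_max_left _ _)
    have hexpS : Real.exp (-Real.sqrt S) ≤ 1/ℓ₀ := by
      have h1 : Real.log ℓ₀ ≤ Real.sqrt S := by
        calc Real.log ℓ₀ ≤ max 0 (Real.log ℓ₀) := le_max_right _ _
          _ = Real.sqrt ((max 0 (Real.log ℓ₀))^2) := (Real.sqrt_sq (le_max_left _ _)).symm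
          _ ≤ Real.sqrt S := Real.sqrt_le_sqrt (le_max_right _ _)
      calc Real.exp (-Real.sqrt S) ≤ Real.exp (Real.log (1/ℓ₀)) := by
            refine Real.exp_le_exp.2 ?_
            rw [one_div, Real.log_inv]
            linarith
        _ = 1/ℓ₀ := Real.exp_log (by positivity)
    set β : ℝ := Real.log (1 + ℓ₀*ε) with hβdef
    have hβ : 0 < β := Real.log_pos (by nlinarith)
    set r : ℝ := min (1/4) (β^2/(4*S)) with hrdef
    have hr : 0 < r := lt_min (by norm_num) (by positivity)
    have hbound : ∀ s ≥ (0:ℝ), Real.exp (2 * Real.sqrt (r * s)) / u s ≤ 1/ℓ₀ + ε := by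
      intro s hs
      rcases le_or_gt s S with hsS | hsS
      · have h1 : Real.sqrt (r*s) ≤ β/2 := by
          calc Real.sqrt (r*s) ≤ Real.sqrt ((β^2/(4*S))*S) := by
                refine Real.sqrt_le_sqrt ?_
                have h2 : r ≤ β^2/(4*S) := min_le_right _ _
                nlinarith [hr.le, hs]
            _ = Real.sqrt ((β/2)^2) := by rw [show β^2/(4*S)*S = (β/2)^2 by field_simp; ring]
            _ = β/2 := Real.sqrt_sq (by positivity)
        have h2 : Real.exp (2 * Real.sqrt (r*s)) ≤ 1 + ℓ₀*ε := by
          calc Real.exp (2 * Real.sqrt (r*s)) ≤ Real.exp β := Real.exp_le_exp.2 (by linarith)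
            _ = 1 + ℓ₀*ε := Real.exp_log (by nlinarith)
        calc Real.exp (2 * Real.sqrt (r * s)) / u s ≤ (1 + ℓ₀*ε) / ℓ₀ :=
              div_le_div₀ (by nlinarith) h2 hℓ₀ (hu_lb s hs)
          _ = 1/ℓ₀ + ε := by field_simp
      · have hsS₁ : S₁ ≤ s := le_trans (le_max_left _ _) hsS.le
        have hus : Real.exp (2*Real.sqrt s) ≤ u s := by
          rw [← Real.exp_log (hpos s hs)]
          exact Real.exp_le_exp.2 (hS₁ s hsS₁)
        have h1 : Real.sqrt (r*s) ≤ (1/2)*Real.sqrt s := by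
          rw [Real.sqrt_mul hr.le]
          have h2 : Real.sqrt r ≤ 1/2 := by
            calc Real.sqrt r ≤ Real.sqrt (1/4) := Real.sqrt_le_sqrt (min_le_left _ _)
              _ = 1/2 := by rw [show (1/4 : ℝ) = (1/2)^2 by norm_num, Real.sqrt_sq (by norm_num)]
          exact mul_le_mul_of_nonneg_right h2 (Real.sqrt_nonneg s)
        have h3 : Real.sqrt S ≤ Real.sqrt s := Real.sqrt_le_sqrt hsS.le
        calc Real.exp (2 * Real.sqrt (r * s)) / u s
              ≤ Real.exp (Real.sqrt s) / Real.exp (2*Real.sqrt s) :=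
                div_le_div₀ (Real.exp_pos _).le (Real.exp_le_exp.2 (by linarith))
                  (Real.exp_pos _) hus
          _ = Real.exp (-Real.sqrt s) := by rw [← Real.exp_sub]; ring_nf
          _ ≤ Real.exp (-Real.sqrt S) := Real.exp_le_exp.2 (by linarith)
          _ ≤ 1/ℓ₀ := hexpS
          _ ≤ 1/ℓ₀ + ε := by linarith
    have hfin : dualL u r ≤ 1/ℓ₀ + ε := LegendreAux.dual_le hbound
    calc ell (dualL u) 0 ≤ dualL u r / r ^ (0:ℝ) :=
          LegendreAux.ell_le (c := 0) (by simpa [← h0] using hdq) hr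
      _ = dualL u r := by rw [Real.rpow_zero, div_one]
      _ ≤ 1/ℓ₀ + ε := hfin
      _ = ℓ₀⁻¹ + ε := by rw [one_div]
  · -- t > 0
    obtain ⟨r₀, hr₀, hmin⟩ := LegendreAux.exists_min hpos hcont hlim ht0
    have hur₀ : 0 < u r₀ := hpos r₀ hr₀.le
    set x₀ : ℝ := Real.sqrt r₀ with hx₀def
    have hx₀ : 0 < x₀ := Real.sqrt_pos.2 hr₀
    have hx₀sq : x₀^2 = r₀ := Real.sq_sqrt hr₀.le
    have hminlog : ∀ z > (0:ℝ), 2*t*Real.log z - 2*t*Real.log x₀ ≤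
        Real.log (u (z^2)) - Real.log (u (x₀^2)) := by
      intro z hz
      have h := hmin (z^2) (by positivity)
      have h1 : Real.log (u r₀ / r₀ ^ t) ≤ Real.log (u (z^2) / (z^2) ^ t) :=
        Real.log_le_log (by positivity) h
      rw [Real.log_div hur₀.ne' (Real.rpow_pos_of_pos hr₀ t).ne',
        Real.log_div (hpos (z^2) (by positivity)).ne'
          (Real.rpow_pos_of_pos (by positivity) t).ne',
        Real.log_rpow hr₀, Real.log_rpow (by positivity)] at h1
      have h2 : Real.log (z^2) = 2 * Real.log z := by
        rw [show z^2 = z*z by ring, Real.log_mul hz.ne' hz.ne']; ring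
      have h3 : Real.log x₀ = Real.log r₀ / 2 := Real.log_sqrt hr₀.le
      rw [h2] at h1
      rw [hx₀sq, h3]
      linarith
    have hsub := LegendreAux.subgrad hconv ht0 hx₀ hminlog
    set rs : ℝ := t^2 / r₀ with hrsdef
    have hrs : 0 < rs := by positivity
    have hdb : dualL u rs ≤ Real.exp (2*t) / u r₀ := by
      refine LegendreAux.dual_le (fun s hs => ?_)
      set x : ℝ := Real.sqrt s with hxdef
      have hxsq : x^2 = s := Real.sq_sqrt hs
      have hkey : Real.sqrt (rs * s) = (t/x₀) * x := by
        have : rs = (t/x₀)^2 := by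
          rw [hrsdef, ← hx₀sq]; field_simp
        rw [this, Real.sqrt_mul (by positivity), Real.sqrt_sq (by positivity)]
      have hs1 := hsub x (Real.sqrt_nonneg s)
      rw [hxsq, hx₀sq] at hs1
      rw [hkey, div_le_div_iff₀ (hpos s hs) hur₀]
      have hexp : Real.exp (2*((t/x₀)*x)) * u r₀ = Real.exp (2*((t/x₀)*x) + Real.log (u r₀)) := by
        rw [Real.exp_add, Real.exp_log hur₀]
      have hexp2 : Real.exp (2*t) * u s = Real.exp (2*t + Real.log (u s)) := by
        rw [Real.exp_add, Real.exp_log (hpos s hs)]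
      rw [hexp, hexp2]
      refine Real.exp_le_exp.2 ?_
      have hc2 : (2*t/x₀) * x₀ = 2*t := by field_simp
      have hc3 : 2*((t/x₀)*x) = (2*t/x₀) * x := by ring
      rw [hc3]
      nlinarith [hs1]
    have helleq : ell u t = u r₀ / r₀ ^ t :=
      le_antisymm (LegendreAux.ell_le hcb hr₀) (LegendreAux.ell_lb hmin)
    have hrspow : rs ^ t = t ^ (2*t) / r₀ ^ t := by
      rw [hrsdef, Real.div_rpow (by positivity) hr₀.le]
      congr 1
      rw [show t^2 = t^(2:ℕ) by norm_num, ← Real.rpow_natCast t 2,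
        ← Real.rpow_mul ht0.le]
      norm_num
    have hr₀t : 0 < r₀ ^ t := Real.rpow_pos_of_pos hr₀ t
    calc ell (dualL u) t ≤ dualL u rs / rs ^ t :=
          LegendreAux.ell_le (c := 0) hdq hrs
      _ ≤ (Real.exp (2*t) / u r₀) / rs ^ t :=
          div_le_div_of_nonneg_right hdb (Real.rpow_pos_of_pos hrs t).le
      _ = Real.exp (2 * t) / (ell u t * t ^ (2 * t)) := by
          rw [helleq, hrspow]
          field_simp
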